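/- Suppose the discrete-time system g(x,t) = f(x,t) + w_t is (beta, rho, gamma)-E-delta-ISS for every noise realization with sup_t ||w_t|| <= W, and ||B(x,t)|| <= M, ||Y(x,t)|| <= M, and the parameter error satisfies ||tilde_alpha_t|| <= 2D. Let x^a and x^c be trajectories with the same initial condition x_0 and same noise, where x^a_{t+1} = f(x^a_t,t) + B_t Y_t tilde_alpha_t + w_t and x^c_{t+1} = f(x^c_t,t) + w_t. Then with B_x := beta*||x_0|| + gamma*(2DM^2 + W)/(1-rho), we have for all T >= 1: sum_{t=0}^{T-1} (||x^a_t||^2 - ||x^c_t||^2) <= (2*B_x*gamma/(1-rho)) * sqrt(T) * sqrt(sum_{t=0}^{T-1} ||B_t Y_t tilde_alpha_t||^2). -/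

import Mathlib

open Finset

-- geometric tail bound
lemma geom_aux {ρ : ℝ} (hρ0 : 0 ≤ ρ) (hρ1 : ρ < 1) (t : ℕ) :
    ∑ k ∈ Finset.range t, ρ ^ k ≤ 1 / (1 - ρ) := by
  have h1 : (0:ℝ) < 1 - ρ := by linarith
  rw [geom_sum_eq (by linarith),
    show (ρ ^ t - 1) / (ρ - 1) = (1 - ρ ^ t) / (1 - ρ) by
      rw [← neg_div_neg_eq]; congr 1 <;> ring]
  rw [div_le_div_iff₀ h1 h1]
  nlinarith [pow_nonneg hρ0 t]

lemma geom_aux' {ρ : ℝ} (hρ0 : 0 ≤ ρ) (hρ1 : ρ < 1) (t : ℕ) :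
    ∑ k ∈ Finset.range t, ρ ^ (t - 1 - k) ≤ 1 / (1 - ρ) := by
  rw [Finset.sum_range_reflect (fun k => ρ ^ k) t]
  exact geom_aux hρ0 hρ1 t

-- bound a discounted sum
lemma disc_sum_bound {ρ C : ℝ} (hρ0 : 0 ≤ ρ) (hρ1 : ρ < 1) (hC : 0 ≤ C)
    (c : ℕ → ℝ) (hc' : ∀ k, c k ≤ C) (t : ℕ) :
    ∑ k ∈ Finset.range t, ρ ^ (t - 1 - k) * c k ≤ C / (1 - ρ) := by
  calc ∑ k ∈ Finset.range t, ρ ^ (t - 1 - k) * c k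
      ≤ ∑ k ∈ Finset.range t, ρ ^ (t - 1 - k) * C := by
        apply Finset.sum_le_sum
        intro k _
        exact mul_le_mul_of_nonneg_left (hc' k) (pow_nonneg hρ0 _)
    _ = (∑ k ∈ Finset.range t, ρ ^ (t - 1 - k)) * C := by rw [Finset.sum_mul]
    _ ≤ (1 / (1 - ρ)) * C := mul_le_mul_of_nonneg_right (geom_aux' hρ0 hρ1 t) hC
    _ = C / (1 - ρ) := by ring

-- triangular sum swap
lemma tri_swap (F : ℕ → ℕ → ℝ) (T : ℕ) :
    ∑ t ∈ Finset.range T, ∑ k ∈ Finset.range t, F t k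
      = ∑ k ∈ Finset.range T, ∑ t ∈ Finset.Ico (k + 1) T, F t k := by
  induction T with
  | zero => simp
  | succ T ih =>
    rw [Finset.sum_range_succ, ih, Finset.sum_range_succ]
    have h1 : ∀ k ∈ Finset.range T,
        ∑ t ∈ Finset.Ico (k + 1) (T + 1), F t k
          = (∑ t ∈ Finset.Ico (k + 1) T, F t k) + F T k := by
      intro k hk
      rw [Finset.sum_Ico_succ_top (Finset.mem_range.mp hk)]
    rw [Finset.sum_congr rfl h1, Finset.sum_add_distrib]
    simp

lemma tail_geom {ρ : ℝ} (hρ0 : 0 ≤ ρ) (hρ1 : ρ < 1) (k T : ℕ) :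
    ∑ t ∈ Finset.Ico (k + 1) T, ρ ^ (t - 1 - k) ≤ 1 / (1 - ρ) := by
  rw [Finset.sum_Ico_eq_sum_range]
  have h : ∀ j, (k + 1 + j) - 1 - k = j := by intro j; omega
  calc ∑ j ∈ Finset.range (T - (k + 1)), ρ ^ ((k + 1 + j) - 1 - k)
      = ∑ j ∈ Finset.range (T - (k + 1)), ρ ^ j := by
        apply Finset.sum_congr rfl; intro j _; rw [h]
    _ ≤ 1 / (1 - ρ) := geom_aux hρ0 hρ1 _

-- Cauchy-Schwarz step
lemma cs_step (a : ℕ → ℝ) (ha : ∀ k, 0 ≤ a k) (T : ℕ) :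
    ∑ k ∈ Finset.range T, a k
      ≤ Real.sqrt T * Real.sqrt (∑ k ∈ Finset.range T, a k ^ 2) := by
  have h := Finset.sum_mul_sq_le_sq_mul_sq (Finset.range T) (fun _ => (1:ℝ)) a
  simp only [one_mul, one_pow] at h
  have hsum : (∑ k ∈ Finset.range T, (1:ℝ)) = T := by simp
  rw [hsum] at h
  have h0 : 0 ≤ ∑ k ∈ Finset.range T, a k :=
    Finset.sum_nonneg fun k _ => ha k
  calc ∑ k ∈ Finset.range T, a k
      = Real.sqrt ((∑ k ∈ Finset.range T, a k) ^ 2) := (Real.sqrt_sq h0).symm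
    _ ≤ Real.sqrt ((T:ℝ) * ∑ k ∈ Finset.range T, a k ^ 2) := Real.sqrt_le_sqrt h
    _ = Real.sqrt T * Real.sqrt (∑ k ∈ Finset.range T, a k ^ 2) :=
        Real.sqrt_mul (Nat.cast_nonneg T) _

theorem stmt14 (n d p : ℕ) (β ρ γ W D M : ℝ)
    (hβ : 0 < β) (hρ0 : 0 < ρ) (hρ1 : ρ < 1) (hγ : 0 < γ)
    (hW : 0 ≤ W) (hD : 0 < D) (hM : 0 ≤ M)
    (f : EuclideanSpace ℝ (Fin n) → ℕ → EuclideanSpace ℝ (Fin n))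
    (hf0 : ∀ t, f 0 t = 0)
    -- the system f perturbed by any admissible noise sequence is (β,ρ,γ)-E-δISS
    (hiss : ∀ w : ℕ → EuclideanSpace ℝ (Fin n), (∀ t, ‖w t‖ ≤ W) →
      ∀ (xp yq u : ℕ → EuclideanSpace ℝ (Fin n)),
        (∀ t, xp (t + 1) = f (xp t) t + w t + u t) →
        (∀ t, yq (t + 1) = f (yq t) t + w t) →
        ∀ t, ‖xp t - yq t‖ ≤ β * ρ ^ t * ‖xp 0 - yq 0‖ +
          γ * ∑ k ∈ Finset.range t, ρ ^ (t - 1 - k) * ‖u k‖)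
    (w : ℕ → EuclideanSpace ℝ (Fin n)) (hw : ∀ t, ‖w t‖ ≤ W)
    (B : ℕ → (EuclideanSpace ℝ (Fin d) →L[ℝ] EuclideanSpace ℝ (Fin n)))
    (Y : ℕ → (EuclideanSpace ℝ (Fin p) →L[ℝ] EuclideanSpace ℝ (Fin d)))
    (tilα : ℕ → EuclideanSpace ℝ (Fin p))
    (hB : ∀ t, ‖B t‖ ≤ M) (hY : ∀ t, ‖Y t‖ ≤ M) (htil : ∀ t, ‖tilα t‖ ≤ 2 * D)
    (x0 : EuclideanSpace ℝ (Fin n))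
    (xa xc : ℕ → EuclideanSpace ℝ (Fin n)) (hxa0 : xa 0 = x0) (hxc0 : xc 0 = x0)
    (hxa : ∀ t, xa (t + 1) = f (xa t) t + (B t) ((Y t) (tilα t)) + w t)
    (hxc : ∀ t, xc (t + 1) = f (xc t) t + w t) :
    ∀ T : ℕ, 1 ≤ T →
      ∑ t ∈ Finset.range T, (‖xa t‖ ^ 2 - ‖xc t‖ ^ 2) ≤
        (2 * (β * ‖x0‖ + γ * (2 * D * M ^ 2 + W) / (1 - ρ)) * γ / (1 - ρ)) *
          Real.sqrt T *
          Real.sqrt (∑ t ∈ Finset.range T, ‖(B t) ((Y t) (tilα t))‖ ^ 2) := by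
  intro T hT
  have hρ' : (0:ℝ) < 1 - ρ := by linarith
  set u : ℕ → EuclideanSpace ℝ (Fin n) := fun t => (B t) ((Y t) (tilα t)) with hu
  set Bx : ℝ := β * ‖x0‖ + γ * (2 * D * M ^ 2 + W) / (1 - ρ) with hBx
  -- bound on u
  have hun : ∀ k, ‖u k‖ ≤ 2 * D * M ^ 2 := by
    intro k
    have h1 : ‖(B k) ((Y k) (tilα k))‖ ≤ ‖B k‖ * ‖(Y k) (tilα k)‖ :=
      (B k).le_opNorm _
    have h2 : ‖(Y k) (tilα k)‖ ≤ ‖Y k‖ * ‖tilα k‖ := (Y k).le_opNorm _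
    have h3 : ‖Y k‖ * ‖tilα k‖ ≤ M * (2 * D) := by
      apply mul_le_mul (hY k) (htil k) (norm_nonneg _) hM
    have h4 : ‖B k‖ * ‖(Y k) (tilα k)‖ ≤ M * (M * (2 * D)) := by
      apply mul_le_mul (hB k) (h2.trans h3) (norm_nonneg _) hM
    calc ‖u k‖ ≤ M * (M * (2 * D)) := h1.trans h4
      _ = 2 * D * M ^ 2 := by ring
  have huw : ∀ k, ‖u k + w k‖ ≤ 2 * D * M ^ 2 + W := by
    intro k
    calc ‖u k + w k‖ ≤ ‖u k‖ + ‖w k‖ := norm_add_le _ _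
      _ ≤ 2 * D * M ^ 2 + W := add_le_add (hun k) (hw k)
  have hC0 : (0:ℝ) ≤ 2 * D * M ^ 2 + W := by positivity
  -- zero trajectory bound for xa
  have hxaB : ∀ t, ‖xa t‖ ≤ Bx := by
    intro t
    have h := hiss (fun _ => 0) (by intro t; simpa using hW) xa (fun _ => 0)
      (fun t => u t + w t)
      (by intro t; rw [hxa t]; abel)
      (by intro t; simp [hf0])
      t
    simp only [sub_zero, hxa0, norm_zero] at h
    have h1 : β * ρ ^ t * ‖x0‖ ≤ β * ‖x0‖ := by
      have h0 := pow_le_one₀ hρ0.le hρ1.le (n := t)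
      nlinarith [norm_nonneg x0, pow_nonneg hρ0.le t,
        mul_nonneg (mul_nonneg (by linarith : (0:ℝ) ≤ 1 - ρ ^ t) hβ.le)
          (norm_nonneg x0)]
    have h2 : ∑ k ∈ Finset.range t, ρ ^ (t - 1 - k) * ‖u k + w k‖
        ≤ (2 * D * M ^ 2 + W) / (1 - ρ) :=
      disc_sum_bound hρ0.le hρ1 hC0 _ huw t
    calc ‖xa t‖ ≤ β * ρ ^ t * ‖x0‖ +
          γ * ∑ k ∈ Finset.range t, ρ ^ (t - 1 - k) * ‖u k + w k‖ := h
      _ ≤ β * ‖x0‖ + γ * ((2 * D * M ^ 2 + W) / (1 - ρ)) := by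
          exact add_le_add h1 (mul_le_mul_of_nonneg_left h2 hγ.le)
      _ = Bx := by rw [hBx]; ring
  -- zero trajectory bound for xc
  have hxcB : ∀ t, ‖xc t‖ ≤ Bx := by
    intro t
    have h := hiss (fun _ => 0) (by intro t; simpa using hW) xc (fun _ => 0) w
      (by intro t; rw [hxc t]; abel)
      (by intro t; simp [hf0])
      t
    simp only [sub_zero, hxc0, norm_zero] at h
    have h1 : β * ρ ^ t * ‖x0‖ ≤ β * ‖x0‖ := by
      have h0 := pow_le_one₀ hρ0.le hρ1.le (n := t)
      nlinarith [norm_nonneg x0, pow_nonneg hρ0.le t,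
        mul_nonneg (mul_nonneg (by linarith : (0:ℝ) ≤ 1 - ρ ^ t) hβ.le)
          (norm_nonneg x0)]
    have h2 : ∑ k ∈ Finset.range t, ρ ^ (t - 1 - k) * ‖w k‖
        ≤ W / (1 - ρ) := disc_sum_bound hρ0.le hρ1 hW _ hw t
    have h3 : W / (1 - ρ) ≤ (2 * D * M ^ 2 + W) / (1 - ρ) := by
      have h4 : (0:ℝ) ≤ 2 * D * M ^ 2 := by positivity
      gcongr
      linarith
    calc ‖xc t‖ ≤ β * ρ ^ t * ‖x0‖ +
          γ * ∑ k ∈ Finset.range t, ρ ^ (t - 1 - k) * ‖w k‖ := h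
      _ ≤ β * ‖x0‖ + γ * ((2 * D * M ^ 2 + W) / (1 - ρ)) := by
          exact add_le_add h1 (mul_le_mul_of_nonneg_left (h2.trans h3) hγ.le)
      _ = Bx := by rw [hBx]; ring
  have hBx0 : 0 ≤ Bx := (norm_nonneg (xa 0)).trans (hxaB 0)
  -- difference bound
  have hdiff : ∀ t, ‖xa t - xc t‖ ≤
      γ * ∑ k ∈ Finset.range t, ρ ^ (t - 1 - k) * ‖u k‖ := by
    intro t
    have h := hiss w hw xa xc u
      (by intro t; rw [hxa t]; abel)
      hxc t
    have h0 : xa 0 - xc 0 = 0 := by rw [hxa0, hxc0]; abel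
    rw [h0, norm_zero, mul_zero, zero_add] at h
    exact h
  -- per-term bound on squared norms
  have hterm : ∀ t, ‖xa t‖ ^ 2 - ‖xc t‖ ^ 2 ≤ 2 * Bx * ‖xa t - xc t‖ := by
    intro t
    have h1 := norm_sub_norm_le (xa t) (xc t)
    nlinarith [hxaB t, hxcB t, norm_nonneg (xa t), norm_nonneg (xc t),
      norm_nonneg (xa t - xc t)]
  -- sum it up
  have hS1 : ∑ t ∈ Finset.range T, (‖xa t‖ ^ 2 - ‖xc t‖ ^ 2)
      ≤ 2 * Bx * γ * ∑ t ∈ Finset.range T,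
          ∑ k ∈ Finset.range t, ρ ^ (t - 1 - k) * ‖u k‖ := by
    calc ∑ t ∈ Finset.range T, (‖xa t‖ ^ 2 - ‖xc t‖ ^ 2)
        ≤ ∑ t ∈ Finset.range T, 2 * Bx * ‖xa t - xc t‖ :=
          Finset.sum_le_sum fun t _ => hterm t
      _ ≤ ∑ t ∈ Finset.range T,
            2 * Bx * (γ * ∑ k ∈ Finset.range t, ρ ^ (t - 1 - k) * ‖u k‖) := by
          apply Finset.sum_le_sum
          intro t _
          exact mul_le_mul_of_nonneg_left (hdiff t) (by positivity)
      _ = 2 * Bx * γ * ∑ t ∈ Finset.range T,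
            ∑ k ∈ Finset.range t, ρ ^ (t - 1 - k) * ‖u k‖ := by
          rw [Finset.mul_sum]
          apply Finset.sum_congr rfl
          intro t _
          ring
  -- swap the double sum and bound
  have hS2 : ∑ t ∈ Finset.range T, ∑ k ∈ Finset.range t, ρ ^ (t - 1 - k) * ‖u k‖
      ≤ (1 / (1 - ρ)) * ∑ k ∈ Finset.range T, ‖u k‖ := by
    rw [tri_swap (fun t k => ρ ^ (t - 1 - k) * ‖u k‖) T, Finset.mul_sum]
    apply Finset.sum_le_sum
    intro k _
    have h1 : ∑ t ∈ Finset.Ico (k + 1) T, ρ ^ (t - 1 - k) * ‖u k‖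
        = (∑ t ∈ Finset.Ico (k + 1) T, ρ ^ (t - 1 - k)) * ‖u k‖ := by
      rw [Finset.sum_mul]
    rw [h1]
    exact mul_le_mul_of_nonneg_right (tail_geom hρ0.le hρ1 k T) (norm_nonneg _)
  -- Cauchy-Schwarz
  have hS3 : ∑ k ∈ Finset.range T, ‖u k‖
      ≤ Real.sqrt T * Real.sqrt (∑ k ∈ Finset.range T, ‖u k‖ ^ 2) :=
    cs_step (fun k => ‖u k‖) (fun k => norm_nonneg _) T
  have hc1 : (0:ℝ) ≤ 2 * Bx * γ := by positivity
  have hc2 : (0:ℝ) ≤ 2 * Bx * γ / (1 - ρ) := by positivity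
  calc ∑ t ∈ Finset.range T, (‖xa t‖ ^ 2 - ‖xc t‖ ^ 2)
      ≤ 2 * Bx * γ * ∑ t ∈ Finset.range T,
          ∑ k ∈ Finset.range t, ρ ^ (t - 1 - k) * ‖u k‖ := hS1
    _ ≤ 2 * Bx * γ * ((1 / (1 - ρ)) * ∑ k ∈ Finset.range T, ‖u k‖) :=
        mul_le_mul_of_nonneg_left hS2 hc1
    _ = (2 * Bx * γ / (1 - ρ)) * ∑ k ∈ Finset.range T, ‖u k‖ := by ring
    _ ≤ (2 * Bx * γ / (1 - ρ)) *
          (Real.sqrt T * Real.sqrt (∑ k ∈ Finset.range T, ‖u k‖ ^ 2)) :=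
        mul_le_mul_of_nonneg_left hS3 hc2
    _ = (2 * Bx * γ / (1 - ρ)) * Real.sqrt T *
          Real.sqrt (∑ t ∈ Finset.range T, ‖u t‖ ^ 2) := by ring
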